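/- Let G be a finitely generated group. Then G is infinite if and only if the set of squares {g² : g ∈ G} is infinite. -/

import Mathlib

/-- Extract one occurrence of `s` from a list over a conjugation-closed set `S`. -/
private lemma extract_one {G : Type*} [Group G] [DecidableEq G] {S : Set G}
    (hconj : ∀ s ∈ S, ∀ g : G, g⁻¹ * s * g ∈ S) (s : G) :
    ∀ (l : List G), (∀ a ∈ l, a ∈ S) → s ∈ l →
      ∃ l' : List G, (∀ a ∈ l', a ∈ S) ∧ l'.length + 1 = l.length ∧
        s * l'.prod = l.prod ∧ l.count s ≤ l'.count s + 1 := by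
  intro l
  induction l with
  | nil => intro _ hs; simp at hs
  | cons a t ih =>
    intro hl hs
    by_cases has : a = s
    · subst has
      exact ⟨t, fun x hx => hl x (List.mem_cons_of_mem _ hx), by simp, by simp,
        by simp [List.count_cons]⟩
    · have hst : s ∈ t := by
        rcases List.mem_cons.1 hs with h | h
        · exact absurd h.symm has
        · exact h
      obtain ⟨t', ht'S, ht'len, ht'prod, ht'count⟩ :=
        ih (fun x hx => hl x (List.mem_cons_of_mem _ hx)) hst
      refine ⟨(s⁻¹ * a * s) :: t', ?_, by simp [← ht'len], ?_, ?_⟩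
      · intro x hx
        rcases List.mem_cons.1 hx with rfl | hx
        · exact hconj a (hl a List.mem_cons_self) s
        · exact ht'S x hx
      · have : s * ((s⁻¹ * a * s) * t'.prod) = a * (s * t'.prod) := by group
        simpa [List.prod_cons, mul_assoc, ht'prod] using this.trans (by rw [ht'prod])
      · have h1 : List.count s t' ≤ List.count s ((s⁻¹ * a * s) :: t') :=
          List.count_le_count_cons ..
        have h2 : List.count s (a :: t) = List.count s t := by
          simp [List.count_cons, Ne.symm has, has]
        omega

/-- Extract `c` occurrences of `s`. -/
private lemma extract_many {G : Type*} [Group G] [DecidableEq G] {S : Set G}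
    (hconj : ∀ s ∈ S, ∀ g : G, g⁻¹ * s * g ∈ S) (s : G) :
    ∀ (c : ℕ) (l : List G), (∀ a ∈ l, a ∈ S) → c ≤ l.count s →
      ∃ l' : List G, (∀ a ∈ l', a ∈ S) ∧ l'.length + c = l.length ∧
        s ^ c * l'.prod = l.prod := by
  intro c
  induction c with
  | zero => intro l hl _; exact ⟨l, hl, by simp, by simp⟩
  | succ n ih =>
    intro l hl hc
    have hs : s ∈ l := List.count_pos_iff.1 (by omega)
    obtain ⟨l₁, hl₁S, hl₁len, hl₁prod, hl₁count⟩ := extract_one hconj s l hl hs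
    obtain ⟨l₂, hl₂S, hl₂len, hl₂prod⟩ := ih l₁ hl₁S (by omega)
    refine ⟨l₂, hl₂S, by omega, ?_⟩
    calc s ^ (n + 1) * l₂.prod = s * (s ^ n * l₂.prod) := by rw [pow_succ']; group
    _ = s * l₁.prod := by rw [hl₂prod]
    _ = l.prod := hl₁prod

/-- **Dietzmann's lemma**: a finite conjugation-closed, inverse-closed set of elements of
finite order generates a finite subgroup. -/
private lemma dietzmann {G : Type*} [Group G] {S : Set G} (hS : S.Finite)
    (hconj : ∀ s ∈ S, ∀ g : G, g⁻¹ * s * g ∈ S)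
    (hinv : ∀ s ∈ S, s⁻¹ ∈ S)
    (hord : ∀ s ∈ S, IsOfFinOrder s) :
    (Subgroup.closure S : Set G).Finite := by
  classical
  set B : ℕ := ∑ s ∈ hS.toFinset, orderOf s with hB
  -- every element of the closure is the product of a list over S of length ≤ B
  have key : ∀ n (l : List G), l.length = n → (∀ a ∈ l, a ∈ S) →
      ∃ l' : List G, (∀ a ∈ l', a ∈ S) ∧ l'.length ≤ B ∧ l'.prod = l.prod := by
    intro n
    induction n using Nat.strong_induction_on with
    | _ n ih =>
      intro l hlen hl
      by_cases hle : l.length ≤ B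
      · exact ⟨l, hl, hle, rfl⟩
      · -- pigeonhole: some s ∈ S appears ≥ orderOf s times
        have hsub : l.toFinset ⊆ hS.toFinset := by
          intro a ha
          simpa using hl a (List.mem_toFinset.1 ha)
        by_cases hcount : ∀ s ∈ hS.toFinset, l.count s ≤ orderOf s
        · exfalso
          have : l.length = ∑ a ∈ l.toFinset, l.count a := by
            simpa using (Multiset.toFinset_sum_count_eq (l : Multiset G)).symm
          have hle2 : ∑ a ∈ l.toFinset, l.count a ≤ ∑ a ∈ hS.toFinset, orderOf a := by
            refine Finset.sum_le_sum_of_subset_of_nonneg hsub (fun _ _ _ => Nat.zero_le _)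
              |>.trans ?_
            exact Finset.sum_le_sum fun a ha => hcount a ha
          omega
        · push_neg at hcount
          obtain ⟨s, hsS, hsc⟩ := hcount
          have hsS' : s ∈ S := by simpa using hsS
          have hordpos : 0 < orderOf s := (hord s hsS').orderOf_pos
          obtain ⟨l', hl'S, hl'len, hl'prod⟩ :=
            extract_many hconj s (orderOf s) l hl (le_of_lt hsc)
          rw [pow_orderOf_eq_one] at hl'prod
          obtain ⟨l'', hl''S, hl''len, hl''prod⟩ :=
            ih l'.length (by omega) l' rfl hl'S
          exact ⟨l'', hl''S, hl''len, by rw [hl''prod, ← hl'prod, one_mul]⟩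
  -- the set of bounded-length products over S is finite
  have hfin : (List.prod '' {l : List G | (∀ a ∈ l, a ∈ S) ∧ l.length ≤ B}).Finite := by
    refine Set.Finite.image _ ?_
    have : Finite ↥S := hS.to_subtype
    have h2 : {l : List G | (∀ a ∈ l, a ∈ S) ∧ l.length ≤ B} ⊆
        (fun l : List ↥S => l.map Subtype.val) '' {l : List ↥S | l.length ≤ B} := by
      rintro l ⟨hlS, hlen⟩
      refine ⟨l.pmap (fun a h => (⟨a, h⟩ : ↥S)) hlS, by simpa using hlen, ?_⟩
      simp [List.map_pmap]
    exact ((List.finite_length_le ↥S B).image _).subset h2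
  refine hfin.subset ?_
  intro x hx
  -- get a list representation over S ∪ S⁻¹ ⊆ S
  have hx' : x ∈ Submonoid.closure (S ∪ S⁻¹) := by
    rw [← Subgroup.closure_toSubmonoid]
    exact hx
  obtain ⟨l, hlS, hlprod⟩ := Submonoid.exists_list_of_mem_closure hx'
  have hlS' : ∀ a ∈ l, a ∈ S := by
    intro a ha
    rcases hlS a ha with h | h
    · exact h
    · simpa using hinv _ (Set.mem_inv.1 h)
  obtain ⟨l', hl'S, hl'len, hl'prod⟩ := key l.length l rfl hlS'
  exact ⟨l', ⟨hl'S, hl'len⟩, by rw [hl'prod, hlprod]⟩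

/-- **Corollary.** A finitely generated group `G` is infinite if and only if its set of
squares `{g² : g ∈ G}` is infinite. -/
theorem infinite_iff_infinitely_many_squares {G : Type*} [Group G] (hFG : Group.FG G) :
    Infinite G ↔ {x : G | ∃ g : G, g ^ 2 = x}.Infinite := by
  constructor
  · intro hG
    by_contra hfin
    rw [Set.not_infinite] at hfin
    set S : Set G := {x : G | ∃ g : G, g ^ 2 = x} with hSdef
    have hconj : ∀ s ∈ S, ∀ g : G, g⁻¹ * s * g ∈ S := by
      rintro s ⟨a, rfl⟩ g
      exact ⟨g⁻¹ * a * g, by rw [pow_two, pow_two]; group⟩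
    have hinv : ∀ s ∈ S, s⁻¹ ∈ S := by
      rintro s ⟨a, rfl⟩
      exact ⟨a⁻¹, by rw [pow_two, pow_two]; group⟩
    have hord : ∀ s ∈ S, IsOfFinOrder s := by
      rintro s hs
      rw [← finite_powers]
      refine hfin.subset ?_
      rintro x ⟨k, rfl⟩
      obtain ⟨a, rfl⟩ := hs
      exact ⟨a ^ k, by simp [← pow_mul, Nat.mul_comm]⟩
    -- the subgroup generated by squares is finite
    have hNfin : (Subgroup.closure S : Set G).Finite := dietzmann hfin hconj hinv hord
    set N : Subgroup G := Subgroup.closure S with hNdef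
    have hNormal : N.Normal := by
      constructor
      intro n hn g
      refine Subgroup.closure_induction
        (fun x hx => Subgroup.subset_closure ?_)
        (by simpa using one_mem (Subgroup.closure S)) (fun x y _ _ hx hy => ?_) (fun x _ hx => ?_) hn
      · simpa [mul_assoc] using hconj x hx g⁻¹
      · have : g * (x * y) * g⁻¹ = (g * x * g⁻¹) * (g * y * g⁻¹) := by group
        rw [this]; exact mul_mem hx hy
      · have : g * x⁻¹ * g⁻¹ = (g * x * g⁻¹)⁻¹ := by group
        rw [this]; exact inv_mem hx
    -- the quotient has exponent 2, is f.g., hence finite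
    have hQsq : ∀ x : G ⧸ N, x ^ 2 = 1 := by
      intro x
      obtain ⟨g, rfl⟩ := QuotientGroup.mk'_surjective N x
      have : (g : G) ^ 2 ∈ N := Subgroup.subset_closure ⟨g, rfl⟩
      rw [← QuotientGroup.eq_one_iff] at this
      simpa using this
    have hQcomm : ∀ a b : G ⧸ N, a * b = b * a := by
      intro a b
      have h1 : (a * b) * (a * b) = 1 := by
        have := hQsq (a * b); rwa [pow_two] at this
      have ha : a * a = 1 := by have := hQsq a; rwa [pow_two] at this
      have hb : b * b = 1 := by have := hQsq b; rwa [pow_two] at this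
      calc a * b = a * ((a * b) * (a * b)) * b := by rw [h1]; group
        _ = (a * a) * (b * a) * (b * b) := by group
        _ = b * a := by rw [ha, hb]; group
    have hQFG : Group.FG (G ⧸ N) := Group.fg_of_surjective (QuotientGroup.mk'_surjective N)
    obtain ⟨T, hT⟩ := hQFG.1
    have hQfin : ((Subgroup.closure (T : Set (G ⧸ N))) : Set (G ⧸ N)).Finite := by
      refine dietzmann T.finite_toSet ?_ ?_ ?_
      · intro s _ g
        rw [show g⁻¹ * s * g = s by rw [hQcomm g⁻¹ s]; group]
        assumption
      · intro s hs
        have : s⁻¹ = s := by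
          have := hQsq s
          rw [pow_two] at this
          exact inv_eq_of_mul_eq_one_left this
        rwa [this]
      · intro s _
        exact isOfFinOrder_iff_pow_eq_one.2 ⟨2, by norm_num, hQsq s⟩
    rw [hT] at hQfin
    have : Finite (G ⧸ N) := by
      rw [← Set.finite_univ_iff]
      simpa using hQfin
    have : Finite ↥N := hNfin.to_subtype
    have : Finite G := Finite.of_equiv _ (Subgroup.groupEquivQuotientProdSubgroup (s := N)).symm
    exact absurd this (by rwa [not_finite_iff_infinite])
  · intro h
    by_contra h'
    rw [not_infinite_iff_finite] at h'
    exact h (Set.toFinite _)
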